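/- arXiv:1912.00141 — 6 statements merged into one kernel-verified Lean document; each statement's English description precedes it below -/
import Mathlib

section
/- If (X_α)_{α∈A} is a family of locally solid vector lattices each having the AM-property, then the product X = ∏_α X_α, equipped with the product topology and pointwise ordering, also has the AM-property. -/
open Filter Topology Bornology Set

/-- A solid subset of a lattice-ordered group. -/
def SolidSet {X : Type*} [Lattice X] [AddCommGroup X] (s : Set X) : Prop :=
  ∀ x y : X, |x| ≤ |y| → y ∈ s → x ∈ s

/-- The set of all finite suprema of elements of `A`. -/
def FinSups {X : Type*} [Lattice X] (A : Set X) : Set X :=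
  {x | ∃ a ∈ A, ∃ l : List X, (∀ b ∈ l, b ∈ A) ∧ x = l.foldr (· ⊔ ·) a}

/-- A locally solid topology: a basis at zero of solid sets. -/
def IsLocallySolid (X : Type*) [Lattice X] [AddCommGroup X] [TopologicalSpace X] : Prop :=
  ∀ U ∈ 𝓝 (0 : X), ∃ V ∈ 𝓝 (0 : X), SolidSet V ∧ V ⊆ U

/-- AM-property: finite suprema of topologically bounded sets are topologically bounded. -/
def HasAMProperty (X : Type*) [Lattice X] [AddCommGroup X] [Module ℝ X]
    [TopologicalSpace X] : Prop :=
  ∀ B : Set X, IsVonNBounded ℝ B → IsVonNBounded ℝ (FinSups B)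

/-- Levi property: bounded upward directed sets of positive elements have suprema. -/
def HasLeviProperty (X : Type*) [Lattice X] [AddCommGroup X] [Module ℝ X]
    [TopologicalSpace X] : Prop :=
  ∀ D : Set X, D.Nonempty → DirectedOn (· ≤ ·) D → (∀ x ∈ D, 0 ≤ x) →
    IsVonNBounded ℝ D → ∃ y, IsLUB D y

/-- Lebesgue property: nets decreasing to `0` converge to `0` topologically. -/
def HasLebesgueProperty (X : Type*) [Lattice X] [AddCommGroup X]
    [TopologicalSpace X] : Prop :=
  ∀ {ι : Type} [Nonempty ι] [SemilatticeSup ι] (u : ι → X),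
    Antitone u → IsGLB (Set.range u) 0 → Tendsto u atTop (𝓝 0)

/-- Order (Dedekind) completeness. -/
def OrderComplete (X : Type*) [Lattice X] : Prop :=
  ∀ A : Set X, A.Nonempty → BddAbove A → ∃ y, IsLUB A y

/-- A set is order closed if it contains suprema of its upward directed subsets. -/
def OrderClosedSet {X : Type*} [Lattice X] (s : Set X) : Prop :=
  ∀ A : Set X, A ⊆ s → DirectedOn (· ≤ ·) A → ∀ y, IsLUB A y → y ∈ s

/-- Fatou property: a basis at zero of solid order closed sets. -/
def HasFatouProperty (X : Type*) [Lattice X] [AddCommGroup X] [TopologicalSpace X] : Prop :=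
  ∀ U ∈ 𝓝 (0 : X), ∃ V ∈ 𝓝 (0 : X), SolidSet V ∧ OrderClosedSet V ∧ V ⊆ U

variable {X Y : Type*} [Lattice X] [AddCommGroup X] [Module ℝ X] [TopologicalSpace X]
  [Lattice Y] [AddCommGroup Y] [Module ℝ Y] [TopologicalSpace Y]

/-- An order bounded operator maps order bounded sets to order bounded sets. -/
def OrderBoundedOp (T : X →ₗ[ℝ] Y) : Prop :=
  ∀ A : Set X, BddBelow A → BddAbove A → BddBelow (T '' A) ∧ BddAbove (T '' A)

/-- nb-bounded: maps some zero neighborhood to a topologically bounded set. -/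
def NbBoundedOp (T : X →ₗ[ℝ] Y) : Prop :=
  ∃ U ∈ 𝓝 (0 : X), IsVonNBounded ℝ (T '' U)

/-- bb-bounded: maps topologically bounded sets to topologically bounded sets. -/
def BbBoundedOp (T : X →ₗ[ℝ] Y) : Prop :=
  ∀ B : Set X, IsVonNBounded ℝ B → IsVonNBounded ℝ (T '' B)

/-- `M` is the modulus of `S` (Riesz–Kantorovich formula). -/
def IsModulusOf (S M : X →ₗ[ℝ] Y) : Prop :=
  ∀ x : X, 0 ≤ x → IsLUB {y : Y | ∃ u : X, |u| ≤ x ∧ y = |S u|} (M x)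

/-- The order on operators: `T ≤ S` pointwise on the positive cone. -/
def OpLE (T S : X →ₗ[ℝ] Y) : Prop := ∀ x : X, 0 ≤ x → T x ≤ S x

theorem stmt2 {ι : Type*} (Z : ι → Type*) [∀ i, Lattice (Z i)] [∀ i, AddCommGroup (Z i)]
    [∀ i, CovariantClass (Z i) (Z i) (· + ·) (· ≤ ·)] [∀ i, Module ℝ (Z i)]
    [∀ i, TopologicalSpace (Z i)] [∀ i, IsTopologicalAddGroup (Z i)]
    [∀ i, ContinuousSMul ℝ (Z i)]
    (hsolid : ∀ i, IsLocallySolid (Z i)) (hAM : ∀ i, HasAMProperty (Z i)) :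
    HasAMProperty (∀ i, Z i) := by
  intro B hB
  rw [isVonNBounded_pi_iff]
  intro i
  have h1 : IsVonNBounded ℝ ((fun f : ∀ j, Z j => f i) '' B) :=
    hB.image (ContinuousLinearMap.proj i : (∀ j, Z j) →L[ℝ] Z i)
  refine (hAM i _ h1).subset ?_
  rintro _ ⟨x, ⟨a, ha, l, hl, rfl⟩, rfl⟩
  refine ⟨a i, ⟨a, ha, rfl⟩, l.map (fun f => f i), ?_, ?_⟩
  · rintro b hb
    obtain ⟨f, hf, rfl⟩ := List.mem_map.mp hb
    exact ⟨f, hl f hf, rfl⟩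
  · clear hl
    induction l with
    | nil => rfl
    | cons head tail ih =>
      simp only [List.foldr_cons, List.map_cons, Pi.sup_apply] at ih ⊢
      exact congrArg (fun x => head i ⊔ x) ih
end

section
/- Let X be an order complete locally solid vector lattice. Then X has both the AM-property and the Levi property if and only if every topologically bounded subset of X is order bounded (note every order bounded set is automatically topologically bounded in a locally solid vector lattice). -/
open Filter Topology Bornology Set

variable {X Y : Type*} [Lattice X] [AddCommGroup X] [Module ℝ X] [TopologicalSpace X]
  [Lattice Y] [AddCommGroup Y] [Module ℝ Y] [TopologicalSpace Y]

open scoped Pointwise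

namespace Stmt4Aux

open Filter Topology Bornology Set

variable {Z : Type*} [Lattice Z] [AddCommGroup Z] [CovariantClass Z Z (· + ·) (· ≤ ·)]

lemma foldr_sup_init (l : List Z) (a b : Z) :
    l.foldr (· ⊔ ·) (a ⊔ b) = l.foldr (· ⊔ ·) a ⊔ b := by
  induction l with
  | nil => rfl
  | cons c l ih => simp only [List.foldr_cons, ih, sup_assoc]

lemma le_foldr_sup (l : List Z) (a : Z) : a ≤ l.foldr (· ⊔ ·) a := by
  induction l with
  | nil => exact le_rfl
  | cons c l ih => exact ih.trans le_sup_right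

lemma foldr_sup_le {l : List Z} {a u : Z} (h : ∀ b ∈ l, b ≤ u) (ha : a ≤ u) :
    l.foldr (· ⊔ ·) a ≤ u := by
  induction l with
  | nil => exact ha
  | cons c l ih =>
      exact sup_le (h c (by simp)) (ih fun b hb => h b (List.mem_cons_of_mem _ hb))

lemma sup_mem_finSups {A : Set Z} {x y : Z} (hx : x ∈ FinSups A) (hy : y ∈ FinSups A) :
    x ⊔ y ∈ FinSups A := by
  obtain ⟨a, ha, l, hl, rfl⟩ := hx
  obtain ⟨c, hc, m, hm, rfl⟩ := hy
  refine ⟨c, hc, l ++ a :: m, ?_, ?_⟩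
  · intro b hb
    rcases List.mem_append.1 hb with h | h
    · exact hl b h
    · rcases List.mem_cons.1 h with rfl | h
      · exact ha
      · exact hm b h
  · rw [List.foldr_append, List.foldr_cons, foldr_sup_init]

lemma nsmul_succ_inf_zero (a : Z) : ∀ n : ℕ, (n + 1) • (a ⊓ 0) = ((n + 1) • a) ⊓ (n • (a ⊓ 0))
  | 0 => by simp
  | (n + 1) => by
    have key : (n + 1) • (a ⊓ 0) ≤ (n + 1) • a :=
      nsmul_le_nsmul_right inf_le_left _
    calc (n + 1 + 1) • (a ⊓ 0) = (a ⊓ 0) + (n + 1) • (a ⊓ 0) := succ_nsmul' _ _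
      _ = (a ⊓ 0) + (((n + 1) • a) ⊓ (n • (a ⊓ 0))) := by rw [nsmul_succ_inf_zero a n]
      _ = ((a ⊓ 0) + (n + 1) • a) ⊓ ((a ⊓ 0) + n • (a ⊓ 0)) := add_inf _ _ _
      _ = ((a ⊓ 0) + (n + 1) • a) ⊓ ((n + 1) • (a ⊓ 0)) := by rw [← succ_nsmul']
      _ = ((a + (n + 1) • a) ⊓ (0 + (n + 1) • a)) ⊓ ((n + 1) • (a ⊓ 0)) := by rw [inf_add]
      _ = ((n + 1 + 1) • a ⊓ (n + 1) • a) ⊓ ((n + 1) • (a ⊓ 0)) := by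
            rw [zero_add, ← succ_nsmul']
      _ = ((n + 1 + 1) • a) ⊓ ((n + 1) • (a ⊓ 0)) := by
            rw [inf_assoc, inf_eq_right.2 key]

lemma nonneg_of_nsmul_nonneg {a : Z} {n : ℕ} (hn : n ≠ 0) (h : 0 ≤ n • a) : 0 ≤ a := by
  obtain ⟨m, rfl⟩ := Nat.exists_eq_succ_of_ne_zero hn
  have hz0 : a ⊓ 0 ≤ (0 : Z) := inf_le_right
  have hmz : m • (a ⊓ 0) ≤ 0 := by
    have := nsmul_le_nsmul_right hz0 m
    simpa using this
  have h1 : (m + 1) • (a ⊓ 0) = m • (a ⊓ 0) := by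
    rw [nsmul_succ_inf_zero, inf_eq_right]
    exact hmz.trans h
  have h2 : (a ⊓ 0) + m • (a ⊓ 0) = 0 + m • (a ⊓ 0) := by
    rw [← succ_nsmul', h1, zero_add]
  have h3 : a ⊓ 0 = 0 := add_right_cancel h2
  exact inf_eq_right.1 h3

variable [Module ℝ Z]

lemma ratCast_smul_nonneg {q : ℚ} (hq : 0 ≤ q) {x : Z} (hx : 0 ≤ x) :
    0 ≤ (q : ℝ) • x := by
  apply nonneg_of_nsmul_nonneg q.den_pos.ne'
  have h1 : (q.den : ℝ) * (q : ℝ) = ((q.num : ℚ) : ℝ) := by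
    rw [← Rat.den_mul_eq_num q]
    push_cast
    ring
  have h2 : q.den • ((q : ℝ) • x) = ((q.num : ℚ) : ℝ) • x := by
    rw [← Nat.cast_smul_eq_nsmul ℝ, smul_smul, h1]
  rw [h2]
  obtain ⟨m, hm⟩ := Int.eq_ofNat_of_zero_le (Rat.num_nonneg.2 hq)
  rw [hm]
  have h3 : (((m : ℤ) : ℚ) : ℝ) • x = m • x := by
    push_cast
    exact Nat.cast_smul_eq_nsmul ℝ m x
  rw [h3]
  exact nsmul_nonneg hx m

variable [TopologicalSpace Z] [IsTopologicalAddGroup Z] [ContinuousSMul ℝ Z]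

/-- "almost compatibility": the negative part of `t • x` (for `t, x ≥ 0`) is
infinitesimal, i.e. belongs to every neighborhood of zero. -/
lemma negPart_smul_mem (hsolid : IsLocallySolid Z) {t : ℝ} (ht : 0 ≤ t) {x : Z} (hx : 0 ≤ x) :
    ∀ U ∈ 𝓝 (0 : Z), (t • x)⁻ ∈ U := by
  intro U hU
  obtain ⟨V, hV, hVs, hVU⟩ := hsolid U hU
  have hc1 : Continuous fun r : ℝ => r • x - t • x := by fun_prop
  have hcont : Tendsto (fun r : ℝ => r • x - t • x) (𝓝 t) (𝓝 0) := by
    simpa using hc1.tendsto t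
  obtain ⟨ε, hε, hball⟩ := Metric.mem_nhds_iff.1 (hcont hV)
  obtain ⟨q, hq1, hq2⟩ := exists_rat_btwn (show t < t + ε by linarith)
  have hqmem : (q : ℝ) ∈ Metric.ball t ε := by
    rw [Metric.mem_ball, Real.dist_eq, abs_sub_lt_iff]
    constructor <;> linarith
  have hqV : (q : ℝ) • x - t • x ∈ V := hball hqmem
  have hq0 : (0 : ℚ) ≤ q := by exact_mod_cast ht.trans hq1.le
  have hqx : (0 : Z) ≤ (q : ℝ) • x := ratCast_smul_nonneg hq0 hx
  have key : |(t • x)⁻| ≤ |(q : ℝ) • x - t • x| := by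
    have h1 : |(t • x)⁻ - ((q : ℝ) • x)⁻| ≤ |(-(t • x)) - (-((q : ℝ) • x))| := by
      rw [negPart_def, negPart_def]
      exact abs_sup_sub_sup_le_abs _ _ _
    rw [negPart_eq_zero.2 hqx, sub_zero] at h1
    calc |(t • x)⁻| ≤ |(-(t • x)) - (-((q : ℝ) • x))| := h1
      _ = |(q : ℝ) • x - t • x| := by rw [neg_sub_neg, abs_sub_comm]
  exact hVU (hVs _ _ key hqV)

lemma le_add_of_neg_le_sub {p r z : Z} (h : -z ≤ p - r) : r ≤ p + z := by
  have h' : r - p ≤ z := by rwa [neg_le, neg_sub] at h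
  calc r = (r - p) + p := by abel
    _ ≤ z + p := add_le_add_left h' p
    _ = p + z := add_comm _ _

/-- Order intervals `[0, w]` are von Neumann bounded in a locally solid topology. -/
lemma icc_bounded (hsolid : IsLocallySolid Z) {w : Z} (hw : 0 ≤ w) :
    IsVonNBounded ℝ (Set.Icc (0 : Z) w) := by
  intro U hU
  obtain ⟨V, hV, hVs, hVU⟩ := hsolid U hU
  obtain ⟨A, hA, hAV⟩ := exists_nhds_zero_half hV
  obtain ⟨W, hWn, hWs, hWA⟩ := hsolid A hA
  obtain ⟨B, hBn, hBW⟩ := exists_nhds_zero_half hWn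
  obtain ⟨W₂, hW₂n, hW₂s, hW₂B⟩ := hsolid B hBn
  have hcont : Tendsto (fun r : ℝ => r • w) (𝓝 0) (𝓝 0) := by
    have h := (continuous_id.smul (continuous_const : Continuous fun _ : ℝ => w)).tendsto 0
    have h' : Tendsto (fun r : ℝ => r • w) (𝓝 0) (𝓝 ((0 : ℝ) • w)) := h
    rwa [zero_smul] at h'
  obtain ⟨δ, hδ, hball⟩ := Metric.mem_nhds_iff.1 (hcont hWn)
  rw [absorbs_iff_norm]
  refine ⟨2 / δ, fun c hc x hx => ?_⟩
  have hδ0 : (0 : ℝ) < 2 / δ := by positivity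
  have hcabs : 2 / δ ≤ |c| := by rwa [Real.norm_eq_abs] at hc
  have hc0 : c ≠ 0 := by
    intro h
    rw [h, abs_zero] at hcabs
    linarith
  rw [Set.mem_smul_set_iff_inv_smul_mem₀ hc0]
  set s := c⁻¹ with hsdef
  have hsabs : |s| ≤ δ / 2 := by
    rw [hsdef, abs_inv]
    calc |c|⁻¹ ≤ (2 / δ)⁻¹ := inv_anti₀ hδ0 hcabs
      _ = δ / 2 := by rw [inv_div]
  obtain ⟨q, hq1, hq2⟩ := exists_rat_btwn (show δ / 2 < δ by linarith)
  have hq0R : (0 : ℝ) ≤ (q : ℝ) := le_trans (by positivity) hq1.le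
  have hq0 : (0 : ℚ) ≤ q := by exact_mod_cast hq0R
  have hsq : |s| ≤ (q : ℝ) := hsabs.trans hq1.le
  have h1 : (0 : ℝ) ≤ (q : ℝ) - s := sub_nonneg.2 ((le_abs_self s).trans hsq)
  have h2 : (0 : ℝ) ≤ (q : ℝ) + s := by
    have := (neg_le_abs s).trans hsq
    linarith
  have hd1W₂ : ((q : ℝ) • x - s • x)⁻ ∈ W₂ := by
    rw [← sub_smul]
    exact negPart_smul_mem hsolid h1 hx.1 W₂ hW₂n
  have hd2W₂ : ((q : ℝ) • x + s • x)⁻ ∈ W₂ := by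
    rw [← add_smul]
    exact negPart_smul_mem hsolid h2 hx.1 W₂ hW₂n
  set d1 := ((q : ℝ) • x - s • x)⁻ with hd1def
  set d2 := ((q : ℝ) • x + s • x)⁻ with hd2def
  set e := d1 ⊔ d2 with hedef
  have he0 : (0 : Z) ≤ e := le_trans (negPart_nonneg _) le_sup_left
  have hqx_le : (q : ℝ) • x ≤ (q : ℝ) • w := by
    have h := ratCast_smul_nonneg hq0 (sub_nonneg.2 hx.2)
    rw [smul_sub] at h
    exact sub_nonneg.1 h
  have key1 : s • x ≤ (q : ℝ) • w + e := by
    have ha : -d1 ≤ (q : ℝ) • x - s • x := neg_le.1 (neg_le_negPart _)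
    calc s • x ≤ (q : ℝ) • x + d1 := le_add_of_neg_le_sub ha
      _ ≤ (q : ℝ) • w + e := add_le_add hqx_le le_sup_left
  have key2 : -(s • x) ≤ (q : ℝ) • w + e := by
    have ha : -d2 ≤ (q : ℝ) • x - -(s • x) := by
      rw [sub_neg_eq_add]
      exact neg_le.1 (neg_le_negPart _)
    calc -(s • x) ≤ (q : ℝ) • x + d2 := le_add_of_neg_le_sub ha
      _ ≤ (q : ℝ) • w + e := add_le_add hqx_le le_sup_right
  have habs : |s • x| ≤ (q : ℝ) • w + e := abs_le'.2 ⟨key1, key2⟩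
  have hz0 : (0 : Z) ≤ (q : ℝ) • w + e := add_nonneg (ratCast_smul_nonneg hq0 hw) he0
  have heW : e ∈ W := by
    have hsum : d1 + d2 ∈ W := hBW d1 (hW₂B hd1W₂) d2 (hW₂B hd2W₂)
    apply hWs e (d1 + d2) _ hsum
    have hee : e ≤ d1 + d2 :=
      sup_le (le_add_of_nonneg_right (negPart_nonneg _)) (le_add_of_nonneg_left (negPart_nonneg _))
    rw [abs_of_nonneg he0, abs_of_nonneg (add_nonneg (negPart_nonneg _) (negPart_nonneg _))]
    exact hee
  have hqwW : (q : ℝ) • w ∈ W := by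
    apply hball
    rw [Metric.mem_ball, Real.dist_eq, sub_zero, abs_of_nonneg hq0R]
    exact_mod_cast hq2
  have hzV : (q : ℝ) • w + e ∈ V := hAV _ (hWA hqwW) _ (hWA heW)
  have hsxV : s • x ∈ V := by
    apply hVs (s • x) ((q : ℝ) • w + e) _ hzV
    rwa [abs_of_nonneg hz0]
  exact hVU hsxV

end Stmt4Aux

set_option maxHeartbeats 1000000 in
theorem stmt4 {Z : Type*} [Lattice Z] [AddCommGroup Z]
    [CovariantClass Z Z (· + ·) (· ≤ ·)] [Module ℝ Z]
    [TopologicalSpace Z] [IsTopologicalAddGroup Z] [ContinuousSMul ℝ Z]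
    (hsolid : IsLocallySolid Z) (hoc : OrderComplete Z) :
    (HasAMProperty Z ∧ HasLeviProperty Z) ↔
      (∀ B : Set Z, IsVonNBounded ℝ B → BddBelow B ∧ BddAbove B) := by
  constructor
  · rintro ⟨hAM, hLevi⟩ B hB
    have key : ∀ C : Set Z, IsVonNBounded ℝ C → BddAbove C := by
      intro C hC
      rcases C.eq_empty_or_nonempty with rfl | hne
      · exact bddAbove_empty
      · set A := C ∪ {0} with hAdef
        have hA : IsVonNBounded ℝ A := hC.union (Bornology.isVonNBounded_singleton 0)
        have hFS : IsVonNBounded ℝ (FinSups A) := hAM A hA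
        set D := FinSups A ∩ {x | 0 ≤ x} with hDdef
        have hD : IsVonNBounded ℝ D := hFS.subset Set.inter_subset_left
        have h0A : (0 : Z) ∈ A := Or.inr rfl
        have h0D : (0 : Z) ∈ D := ⟨⟨0, h0A, [], by simp, rfl⟩, le_refl 0⟩
        have hdir : DirectedOn (· ≤ ·) D := by
          intro x hx y hy
          exact ⟨x ⊔ y, ⟨Stmt4Aux.sup_mem_finSups hx.1 hy.1, le_trans hx.2 le_sup_left⟩,
            le_sup_left, le_sup_right⟩
        obtain ⟨y, hy⟩ := hLevi D ⟨0, h0D⟩ hdir (fun x hx => hx.2) hD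
        refine ⟨y, fun b hb => ?_⟩
        have hbD : b ⊔ 0 ∈ D := by
          refine ⟨⟨0, h0A, [b], ?_, rfl⟩, le_sup_right⟩
          intro c hc
          rw [List.mem_singleton] at hc
          subst hc
          exact Or.inl hb
        exact le_trans le_sup_left (hy.1 hbD)
    refine ⟨?_, key B hB⟩
    obtain ⟨y, hy⟩ := key (-B) hB.neg
    refine ⟨-y, fun b hb => ?_⟩
    have hmem : -b ∈ -B := Set.neg_mem_neg.2 hb
    exact neg_le.1 (hy hmem)
  · intro H
    constructor
    · intro B hB
      rcases B.eq_empty_or_nonempty with rfl | ⟨b0, hb0⟩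
      · have hemp : FinSups (∅ : Set Z) = ∅ := by
          apply Set.eq_empty_of_forall_notMem
          rintro x ⟨a, ha, -⟩
          exact ha
        rw [hemp]
        exact Bornology.isVonNBounded_empty ℝ Z
      · obtain ⟨⟨l, hl⟩, ⟨u, hu⟩⟩ := H B hB
        have hlu : l ≤ u := le_trans (hl hb0) (hu hb0)
        have hsub : FinSups B ⊆ ({l} : Set Z) + Set.Icc 0 (u - l) := by
          intro x hx
          obtain ⟨a, ha, lst, hlst, rfl⟩ := hx
          have hxl : l ≤ lst.foldr (· ⊔ ·) a := le_trans (hl ha) (Stmt4Aux.le_foldr_sup lst a)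
          have hxu : lst.foldr (· ⊔ ·) a ≤ u :=
            Stmt4Aux.foldr_sup_le (fun b hb => hu (hlst b hb)) (hu ha)
          rw [Set.mem_add]
          exact ⟨l, rfl, lst.foldr (· ⊔ ·) a - l,
            ⟨sub_nonneg.2 hxl, sub_le_sub_right hxu l⟩, by abel⟩
        exact ((Bornology.isVonNBounded_singleton l).add
          (Stmt4Aux.icc_bounded hsolid (sub_nonneg.2 hlu))).subset hsub
    · intro D hne hdir hpos hD
      exact hoc D hne (H D hD).2
end

section
/- Let X and Y be locally solid vector lattices such that Y is order complete and has both the AM-property and the Levi property. Then every linear operator T : X → Y that maps topologically bounded sets to topologically bounded sets is order bounded. -/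
open Filter Topology Bornology Set
open scoped Pointwise

variable {X Y : Type*} [Lattice X] [AddCommGroup X] [Module ℝ X] [TopologicalSpace X]
  [Lattice Y] [AddCommGroup Y] [Module ℝ Y] [TopologicalSpace Y]

section AuxLattice

variable {G : Type*} [Lattice G] [AddCommGroup G] [CovariantClass G G (· + ·) (· ≤ ·)]

lemma aux_inf_add_le {x y z : G} (hx : 0 ≤ x) (hyz : 0 ≤ y ⊓ z) :
    (x + y) ⊓ z ≤ x ⊓ z + y ⊓ z := by
  have h1 : (x + y) ⊓ z ≤ x + y ⊓ z := by
    rw [← sub_le_iff_le_add']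
    exact le_inf (sub_le_iff_le_add'.2 inf_le_left) ((sub_le_self _ hx).trans inf_le_right)
  rw [← sub_le_iff_le_add]
  exact le_inf (sub_le_iff_le_add.2 (h1.trans (by rw [add_comm]))) 
    ((sub_le_self _ hyz).trans inf_le_right)

lemma aux_disjoint_nsmul {a b : G} (ha : 0 ≤ a) (hb : 0 ≤ b) (hab : a ⊓ b = 0) :
    ∀ n : ℕ, (n • a) ⊓ b = 0 := by
  intro n
  induction n with
  | zero => rw [zero_nsmul]; exact inf_eq_left.mpr hb
  | succ n ih =>
      refine le_antisymm ?_ (le_inf (nsmul_nonneg ha _) hb)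
      calc ((n + 1) • a) ⊓ b = (n • a + a) ⊓ b := by rw [succ_nsmul]
        _ ≤ (n • a) ⊓ b + a ⊓ b := aux_inf_add_le (nsmul_nonneg ha n) (le_inf ha hb)
        _ = 0 := by rw [ih, hab, add_zero]

lemma aux_nonneg_of_nsmul_nonneg {y : G} {n : ℕ} (hn : 0 < n) (h : 0 ≤ n • y) : 0 ≤ y := by
  have d1 : (n • y⁺) ⊓ y⁻ = 0 :=
    aux_disjoint_nsmul (posPart_nonneg y) (negPart_nonneg y) (posPart_inf_negPart_eq_zero y) n
  have d2 : (n • y⁻) ⊓ (n • y⁺) = 0 :=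
    aux_disjoint_nsmul (negPart_nonneg y) (nsmul_nonneg (posPart_nonneg y) n)
      (by rw [inf_comm]; exact d1) n
  have h2 : n • y⁻ ≤ n • y⁺ := by
    have h' : 0 ≤ n • y⁺ - n • y⁻ := by
      rw [← nsmul_sub, posPart_sub_negPart]; exact h
    exact sub_nonneg.mp h'
  have h3 : n • y⁻ = 0 := by
    have := le_inf (le_refl (n • y⁻)) h2
    rw [d2] at this
    exact le_antisymm this (nsmul_nonneg (negPart_nonneg y) n)
  have h4 : y⁻ ≤ n • y⁻ := by
    obtain ⟨k, rfl⟩ := Nat.exists_eq_add_of_lt hn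
    rw [zero_add, succ_nsmul]
    exact le_add_of_nonneg_left (nsmul_nonneg (negPart_nonneg y) k)
  have h5 : y⁻ = 0 := le_antisymm (h4.trans h3.le) (negPart_nonneg y)
  have := posPart_sub_negPart y
  rw [h5, sub_zero] at this
  rw [← this]
  exact posPart_nonneg y

variable [Module ℝ G]

lemma aux_nsmul_inv {n : ℕ} (hn : 0 < n) (x : G) : n • (((n : ℝ)⁻¹) • x) = x := by
  have hne : (n : ℝ) ≠ 0 := Nat.cast_ne_zero.mpr hn.ne'
  rw [← Nat.cast_smul_eq_nsmul ℝ, smul_smul, mul_inv_cancel₀ hne, one_smul]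

lemma aux_inv_smul_nonneg {n : ℕ} (hn : 0 < n) {x : G} (hx : 0 ≤ x) :
    0 ≤ ((n : ℝ)⁻¹) • x :=
  aux_nonneg_of_nsmul_nonneg hn (by rw [aux_nsmul_inv hn]; exact hx)

lemma aux_inv_smul_mono {n : ℕ} (hn : 0 < n) {x y : G} (h : x ≤ y) :
    ((n : ℝ)⁻¹) • x ≤ ((n : ℝ)⁻¹) • y := by
  have := aux_inv_smul_nonneg hn (sub_nonneg.mpr h)
  rw [smul_sub] at this
  exact sub_nonneg.mp this

lemma aux_inv_smul_abs {n : ℕ} (hn : 0 < n) (x : G) :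
    ((n : ℝ)⁻¹) • |x| = |((n : ℝ)⁻¹) • x| := by
  have hnw : n • (((n : ℝ)⁻¹) • x) = x := aux_nsmul_inv hn x
  refine le_antisymm ?_ ?_
  · have h1 : |x| ≤ n • |((n : ℝ)⁻¹) • x| := by
      refine abs_le'.mpr ⟨?_, ?_⟩
      · have h := nsmul_le_nsmul_right (le_abs_self (((n : ℝ)⁻¹) • x)) n
        rwa [hnw] at h
      · have h := nsmul_le_nsmul_right (neg_le_abs (((n : ℝ)⁻¹) • x)) n
        rwa [smul_neg, hnw] at h
    have h2 := aux_inv_smul_mono hn h1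
    rwa [← Nat.cast_smul_eq_nsmul ℝ n, smul_smul,
      inv_mul_cancel₀ (Nat.cast_ne_zero.mpr hn.ne'), one_smul] at h2
  · refine abs_le'.mpr ⟨aux_inv_smul_mono hn (le_abs_self x), ?_⟩
    rw [← smul_neg]
    exact aux_inv_smul_mono hn (neg_le_abs x)

end AuxLattice

section AuxFinSups

variable {E : Type*} [Lattice E]

lemma aux_mem_finSups {A : Set E} {a : E} (h : a ∈ A) : a ∈ FinSups A :=
  ⟨a, h, [], by simp, rfl⟩

lemma aux_base_le_foldr (a : E) (l : List E) : a ≤ l.foldr (· ⊔ ·) a := by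
  induction l with
  | nil => exact le_rfl
  | cons b l ih => exact ih.trans le_sup_right

lemma aux_foldr_append (a₁ a₂ : E) (l₁ l₂ : List E) :
    (l₁ ++ a₁ :: l₂).foldr (· ⊔ ·) a₂ = l₁.foldr (· ⊔ ·) a₁ ⊔ l₂.foldr (· ⊔ ·) a₂ := by
  induction l₁ with
  | nil => simp
  | cons x l ih => simp only [List.cons_append, List.foldr_cons, ih, sup_assoc]

lemma aux_sup_mem_finSups {A : Set E} {z₁ z₂ : E} (h₁ : z₁ ∈ FinSups A)
    (h₂ : z₂ ∈ FinSups A) : z₁ ⊔ z₂ ∈ FinSups A := by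
  obtain ⟨a₁, ha₁, l₁, hl₁, rfl⟩ := h₁
  obtain ⟨a₂, ha₂, l₂, hl₂, rfl⟩ := h₂
  refine ⟨a₂, ha₂, l₁ ++ a₁ :: l₂, ?_, (aux_foldr_append a₁ a₂ l₁ l₂).symm⟩
  intro b hb
  rcases List.mem_append.mp hb with h | h
  · exact hl₁ b h
  · rcases List.mem_cons.mp h with rfl | h
    · exact ha₁
    · exact hl₂ b h

end AuxFinSups

section AuxTop

variable {E : Type*} [Lattice E] [AddCommGroup E] [CovariantClass E E (· + ·) (· ≤ ·)]
  [Module ℝ E] [TopologicalSpace E] [IsTopologicalAddGroup E] [ContinuousSMul ℝ E]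

lemma aux_absorbs_of_nat {U B₀ : Set E} (hB₀U : B₀ ⊆ U) (hbal : Balanced ℝ B₀)
    {n : ℕ} (hn : 0 < n) {S : Set E} (h : ∀ x ∈ S, ((n : ℝ)⁻¹) • x ∈ B₀) :
    Absorbs ℝ U S := by
  have hne : (n : ℝ) ≠ 0 := Nat.cast_ne_zero.mpr hn.ne'
  have hev : ∀ᶠ r : ℝ in cobounded ℝ, (n : ℝ) ≤ ‖r‖ := eventually_cobounded_le_norm _
  show ∀ᶠ r : ℝ in cobounded ℝ, S ⊆ r • U
  filter_upwards [hev] with r hr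
  intro x hx
  have hrpos : (0 : ℝ) < ‖r‖ := lt_of_lt_of_le (by positivity) hr
  have hrne : r ≠ 0 := norm_pos_iff.mp hrpos
  have hnormle : ‖r⁻¹ * (n : ℝ)‖ ≤ 1 := by
    rw [norm_mul, norm_inv]
    rw [Real.norm_natCast]
    rw [← div_eq_inv_mul, div_le_one hrpos]
    exact hr
  have hmem : (r⁻¹ * (n : ℝ)) • (((n : ℝ)⁻¹) • x) ∈ B₀ :=
    hbal _ hnormle (Set.smul_mem_smul_set (h x hx))
  refine Set.mem_smul_set.mpr ⟨_, hB₀U hmem, ?_⟩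
  have hone : r * (r⁻¹ * (n : ℝ)) * (n : ℝ)⁻¹ = 1 := by field_simp
  rw [smul_smul, smul_smul, hone, one_smul]

lemma aux_interval_bounded (hE : ∀ U ∈ 𝓝 (0 : E), ∃ V ∈ 𝓝 (0 : E), SolidSet V ∧ V ⊆ U)
    {c : E} (hc : 0 ≤ c) : IsVonNBounded ℝ {x : E | |x| ≤ c} := by
  intro U hU
  obtain ⟨B₀, ⟨hB₀mem, hbal⟩, hB₀U⟩ := (nhds_basis_balanced ℝ E).mem_iff.1 hU
  obtain ⟨V₀, hV₀mem, hsol, hV₀B₀⟩ := hE B₀ hB₀mem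
  have hcont : Tendsto (fun t : ℝ => t • c) (𝓝 0) (𝓝 0) := by
    have h : Tendsto (fun t : ℝ => t • c) (𝓝 0) (𝓝 ((0 : ℝ) • c)) :=
      (continuous_id.smul (continuous_const : Continuous fun _ : ℝ => c)).tendsto 0
    simpa using h
  have h1 : ∀ᶠ t : ℝ in 𝓝 0, t • c ∈ V₀ := hcont.eventually_mem hV₀mem
  have h2 : Tendsto (fun k : ℕ => ((k : ℝ))⁻¹) atTop (𝓝 0) := by
    simpa [one_div] using (tendsto_one_div_atTop_nhds_zero_nat :
      Tendsto (fun n : ℕ => 1 / (n : ℝ)) atTop (𝓝 0))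
  obtain ⟨n, hn1, hn2⟩ := ((h2.eventually h1).and (eventually_ge_atTop 1)).exists
  have hn : 0 < n := hn2
  refine aux_absorbs_of_nat hB₀U hbal hn ?_
  intro x hx
  refine hV₀B₀ (hsol _ (((n : ℝ)⁻¹) • c) ?_ hn1)
  rw [← aux_inv_smul_abs hn, abs_of_nonneg (aux_inv_smul_nonneg hn hc)]
  exact aux_inv_smul_mono hn hx

lemma aux_abs_image_bounded (hE : ∀ U ∈ 𝓝 (0 : E), ∃ V ∈ 𝓝 (0 : E), SolidSet V ∧ V ⊆ U)
    {B : Set E} (hB : IsVonNBounded ℝ B) :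
    IsVonNBounded ℝ ((fun y => |y|) '' B) := by
  intro U hU
  obtain ⟨B₀, ⟨hB₀mem, hbal⟩, hB₀U⟩ := (nhds_basis_balanced ℝ E).mem_iff.1 hU
  obtain ⟨V₀, hV₀mem, hsol, hV₀B₀⟩ := hE B₀ hB₀mem
  have habs : ∀ᶠ r : ℝ in cobounded ℝ, B ⊆ r • V₀ := hB hV₀mem
  have hnat : Tendsto (fun k : ℕ => (k : ℝ)) atTop (cobounded ℝ) := by
    rw [← comap_norm_atTop, tendsto_comap_iff]
    have heq : (norm ∘ fun k : ℕ => (k : ℝ)) = fun k : ℕ => (k : ℝ) := by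
      funext k; simp
    rw [heq]
    exact tendsto_natCast_atTop_atTop
  obtain ⟨n, hsub, hn1⟩ := ((hnat.eventually habs).and (eventually_ge_atTop 1)).exists
  have hn : 0 < n := hn1
  refine aux_absorbs_of_nat hB₀U hbal hn ?_
  rintro _ ⟨y, hy, rfl⟩
  obtain ⟨v, hv, hyv⟩ := Set.mem_smul_set.mp (hsub hy)
  have hinv : ((n : ℝ)⁻¹) • y = v := by
    rw [← hyv, smul_smul, inv_mul_cancel₀ (Nat.cast_ne_zero.mpr hn.ne'), one_smul]
  refine hV₀B₀ (hsol _ v ?_ hv)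
  rw [aux_inv_smul_abs hn, abs_abs, hinv]

end AuxTop

section Operators

variable {V W : Type*} [Lattice V] [AddCommGroup V]
  [CovariantClass V V (· + ·) (· ≤ ·)] [Module ℝ V]
  [TopologicalSpace V] [IsTopologicalAddGroup V] [ContinuousSMul ℝ V]
  [Lattice W] [AddCommGroup W]
  [CovariantClass W W (· + ·) (· ≤ ·)] [Module ℝ W]
  [TopologicalSpace W] [IsTopologicalAddGroup W] [ContinuousSMul ℝ W]

theorem stmt5 (hV : IsLocallySolid V) (hW : IsLocallySolid W)
    (hoc : OrderComplete W) (hAM : HasAMProperty W) (hLevi : HasLeviProperty W)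
    (T : V →ₗ[ℝ] W) (hT : BbBoundedOp T) : OrderBoundedOp T := by
  intro A hbd hba
  rcases Set.eq_empty_or_nonempty A with rfl | ⟨a₀, ha₀⟩
  · rw [Set.image_empty]
    exact ⟨bddBelow_empty, bddAbove_empty⟩
  obtain ⟨la, hla⟩ := hbd
  obtain ⟨ub, hub⟩ := hba
  have hc0 : 0 ≤ |la| ⊔ |ub| := (abs_nonneg la).trans le_sup_left
  have hAsub : A ⊆ {x : V | |x| ≤ |la| ⊔ |ub|} := by
    intro x hx
    refine abs_le'.mpr ⟨?_, ?_⟩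
    · exact (hub hx).trans ((le_abs_self ub).trans le_sup_right)
    · have h1 : -x ≤ -la := neg_le_neg_iff.mpr (hla hx)
      exact h1.trans ((neg_le_abs la).trans le_sup_left)
  have hAb : IsVonNBounded ℝ A := (aux_interval_bounded hV hc0).subset hAsub
  have hTA : IsVonNBounded ℝ (T '' A) := hT A hAb
  have hB' : IsVonNBounded ℝ ((fun y : W => |y|) '' (T '' A)) := aux_abs_image_bounded hW hTA
  have hD : IsVonNBounded ℝ (FinSups ((fun y : W => |y|) '' (T '' A))) := hAM _ hB'
  have hDne : (FinSups ((fun y : W => |y|) '' (T '' A))).Nonempty :=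
    ⟨|T a₀|, aux_mem_finSups ⟨T a₀, ⟨a₀, ha₀, rfl⟩, rfl⟩⟩
  have hDdir : DirectedOn (· ≤ ·) (FinSups ((fun y : W => |y|) '' (T '' A))) :=
    fun z₁ h₁ z₂ h₂ => ⟨z₁ ⊔ z₂, aux_sup_mem_finSups h₁ h₂, le_sup_left, le_sup_right⟩
  have hDpos : ∀ z ∈ FinSups ((fun y : W => |y|) '' (T '' A)), 0 ≤ z := by
    rintro z ⟨a, ⟨y, ⟨-, -, rfl⟩⟩, l, -, rfl⟩
    exact (abs_nonneg y).trans (aux_base_le_foldr _ _)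
  obtain ⟨s, hs⟩ := hLevi _ hDne hDdir hDpos hD
  have hub' : ∀ z ∈ A, |T z| ≤ s := fun z hz =>
    hs.1 (aux_mem_finSups ⟨T z, ⟨z, hz, rfl⟩, rfl⟩)
  constructor
  · refine ⟨-s, ?_⟩
    rintro _ ⟨z, hz, rfl⟩
    have h1 : -(T z) ≤ s := (neg_le_abs (T z)).trans (hub' z hz)
    exact neg_le.mp (by simpa using h1)
  · refine ⟨s, ?_⟩
    rintro _ ⟨z, hz, rfl⟩
    exact (le_abs_self (T z)).trans (hub' z hz)


end Operators
end

section
/- Let X be an order complete locally solid vector lattice with the AM-property and the Levi property, and Y any locally solid vector lattice. Then every order bounded linear operator T : X → Y maps topologically bounded sets to topologically bounded sets. -/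
open Filter Topology Bornology Set

variable {X Y : Type*} [Lattice X] [AddCommGroup X] [Module ℝ X] [TopologicalSpace X]
  [Lattice Y] [AddCommGroup Y] [Module ℝ Y] [TopologicalSpace Y]

section AuxLatticeGroup
variable {G : Type*} [Lattice G] [AddCommGroup G] [CovariantClass G G (· + ·) (· ≤ ·)]

lemma aux_inf_add_le_s6 {u v w : G} (hu : 0 ≤ u) (hv : 0 ≤ v) (hw : 0 ≤ w) :
    u ⊓ (v + w) ≤ u ⊓ v + u ⊓ w := by
  have key : u ⊓ (v + w) + -(u ⊓ v) ≤ w := by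
    rw [neg_inf, add_sup]
    refine sup_le ?_ ?_
    · exact le_trans (add_le_add_left inf_le_left _) (by simpa using hw)
    · exact le_trans (add_le_add_left inf_le_right _) (le_of_eq (by abel))
  have h1 : u ⊓ (v + w) ≤ u ⊓ v + w := by
    rwa [← sub_eq_add_neg, sub_le_iff_le_add'] at key
  have h2 : u ⊓ (v + w) ≤ (u ⊓ v + w) ⊓ (u ⊓ v + u) :=
    le_inf h1 (le_trans inf_le_left (le_add_of_nonneg_left (le_inf hu hv)))
  calc u ⊓ (v + w) ≤ (u ⊓ v + w) ⊓ (u ⊓ v + u) := h2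
    _ = u ⊓ v + (w ⊓ u) := (add_inf _ _ _).symm
    _ = u ⊓ v + u ⊓ w := by rw [inf_comm w u]

lemma aux_inf_nsmul {u v : G} (hu : 0 ≤ u) (hv : 0 ≤ v) (h : u ⊓ v = 0) :
    ∀ n : ℕ, u ⊓ (n • v) = 0 := by
  intro n
  induction n with
  | zero => simpa using inf_eq_right.mpr hu
  | succ k ih =>
    refine le_antisymm ?_ (le_inf hu (nsmul_nonneg hv (k+1)))
    rw [succ_nsmul]
    exact le_trans (aux_inf_add_le_s6 hu (nsmul_nonneg hv k) hv) (by rw [ih, h, add_zero])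

lemma aux_nonneg_of_nsmul {n : ℕ} (hn : n ≠ 0) {d : G} (h : 0 ≤ n • d) : 0 ≤ d := by
  have hsub : n • d⁺ - n • d⁻ = n • d := by rw [← nsmul_sub, posPart_sub_negPart]
  have h1 : n • d⁻ ≤ n • d⁺ := sub_nonneg.mp (hsub ▸ h)
  have h2 : d⁻ ≤ n • d⁻ := by
    obtain ⟨m, rfl⟩ := Nat.exists_eq_succ_of_ne_zero hn
    rw [succ_nsmul]
    exact le_add_of_nonneg_left (nsmul_nonneg (negPart_nonneg d) m)
  have hd : d⁻ ≤ n • d⁺ := h2.trans h1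
  have hdisj : d⁻ ⊓ (n • d⁺) = 0 :=
    aux_inf_nsmul (negPart_nonneg d) (posPart_nonneg d)
      (by rw [inf_comm]; exact posPart_inf_negPart_eq_zero d) n
  exact negPart_eq_zero.mp ((inf_eq_left.mpr hd).symm.trans hdisj)

lemma aux_nsmul_le_cancel {n : ℕ} (hn : n ≠ 0) {a b : G} (h : n • a ≤ n • b) : a ≤ b :=
  sub_nonneg.mp (aux_nonneg_of_nsmul hn (by rw [nsmul_sub]; exact sub_nonneg.mpr h))

lemma aux_abs_nsmul (n : ℕ) (a : G) : |n • a| = n • |a| := by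
  have h1 : a⁻ ⊓ (n • a⁺) = 0 :=
    aux_inf_nsmul (negPart_nonneg a) (posPart_nonneg a)
      (by rw [inf_comm]; exact posPart_inf_negPart_eq_zero a) n
  have hpn : (n • a⁺) ⊓ (n • a⁻) = 0 :=
    aux_inf_nsmul (nsmul_nonneg (posPart_nonneg a) n) (negPart_nonneg a)
      (by rw [inf_comm]; exact h1) n
  set p := n • a⁺ with hp
  set q := n • a⁻ with hq
  have hsup : p ⊔ q = p + q := by rw [← inf_add_sup, hpn, zero_add]
  have hpp : (p - q)⁺ = p := by
    rw [posPart_def, ← sub_self q, ← sup_sub, hsup, add_sub_cancel_right]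
  have hnp : (p - q)⁻ = q := by
    rw [negPart_def, neg_sub, ← sub_self p, ← sup_sub, sup_comm q p, hsup, add_sub_cancel_left]
  have hval : n • a = p - q := by rw [hp, hq, ← nsmul_sub, posPart_sub_negPart]
  rw [hval, ← posPart_add_negPart (p - q), hpp, hnp, hp, hq, ← nsmul_add, posPart_add_negPart]

end AuxLatticeGroup

section AuxModule
variable {G : Type*} [Lattice G] [AddCommGroup G] [CovariantClass G G (· + ·) (· ≤ ·)]
  [Module ℝ G]

lemma aux_div_smul {n b : ℕ} (hb : b ≠ 0) {x m : G} (hx : |x| ≤ m) :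
    |((n : ℝ) / (b : ℝ)) • x| ≤ ((n : ℝ) / (b : ℝ)) • m ∧ 0 ≤ ((n : ℝ) / (b : ℝ)) • m := by
  set y := ((b : ℝ)⁻¹) • x with hy
  set w := ((b : ℝ)⁻¹) • m with hwdef
  have hbR : (b : ℝ) ≠ 0 := Nat.cast_ne_zero.mpr hb
  have hby : b • y = x := by
    rw [hy, ← Nat.cast_smul_eq_nsmul ℝ, smul_smul, mul_inv_cancel₀ hbR, one_smul]
  have hbw : b • w = m := by
    rw [hwdef, ← Nat.cast_smul_eq_nsmul ℝ, smul_smul, mul_inv_cancel₀ hbR, one_smul]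
  have hm0 : 0 ≤ m := le_trans (abs_nonneg x) hx
  have hw0 : 0 ≤ w := aux_nonneg_of_nsmul hb (by rw [hbw]; exact hm0)
  have hyw : |y| ≤ w := aux_nsmul_le_cancel hb (by rw [← aux_abs_nsmul, hby, hbw]; exact hx)
  have hnx : ((n : ℝ) / (b : ℝ)) • x = n • y := by
    rw [div_eq_mul_inv, mul_smul, ← hy, Nat.cast_smul_eq_nsmul]
  have hnm : ((n : ℝ) / (b : ℝ)) • m = n • w := by
    rw [div_eq_mul_inv, mul_smul, ← hwdef, Nat.cast_smul_eq_nsmul]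
  constructor
  · rw [hnx, hnm, aux_abs_nsmul]
    exact nsmul_le_nsmul_right hyw n
  · rw [hnm]; exact nsmul_nonneg hw0 n

lemma aux_rat_smul_mem {V' : Set G} (hs : SolidSet V') {x m : G} (hx : |x| ≤ m) (q : ℚ)
    (hm : |(q : ℝ)| • m ∈ V') : (q : ℝ) • x ∈ V' := by
  have habs : |(q : ℝ) • x| = |(|(q : ℝ)|) • x| := by
    rcases abs_cases (q : ℝ) with ⟨h1, _⟩ | ⟨h1, _⟩
    · rw [h1]
    · rw [h1, neg_smul, abs_neg]
  have hqform : |(q : ℝ)| = (q.num.natAbs : ℝ) / (q.den : ℝ) := by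
    rw [Rat.cast_def, abs_div, Nat.cast_natAbs,
      abs_of_nonneg (by positivity : (0:ℝ) ≤ (q.den : ℝ))]
    norm_cast
  obtain ⟨hle, hnn⟩ := aux_div_smul (n := q.num.natAbs) (b := q.den) q.den_nz hx
  refine hs _ _ ?_ hm
  rw [habs, hqform, abs_of_nonneg hnn]
  exact hle

end AuxModule

section AuxTop
variable {G : Type*} [Lattice G] [AddCommGroup G] [CovariantClass G G (· + ·) (· ≤ ·)]
  [Module ℝ G] [TopologicalSpace G] [IsTopologicalAddGroup G] [ContinuousSMul ℝ G]

lemma aux_interval_bounded_s6 (hW : IsLocallySolid G) (m : G) :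
    IsVonNBounded ℝ {y : G | |y| ≤ m} := by
  intro U hU
  obtain ⟨U₁, hU₁, hadd⟩ := exists_nhds_zero_half hU
  obtain ⟨V', hV'n, hV'solid, hV'sub⟩ := hW U₁ hU₁
  have hcont : Tendsto (fun s : ℝ => s • m) (𝓝 0) (𝓝 0) := by
    have h := ((continuous_id.smul (continuous_const : Continuous fun _ : ℝ => m))).tendsto 0
    change Tendsto (fun s : ℝ => s • m) (𝓝 0) (𝓝 ((0:ℝ) • m)) at h
    rwa [zero_smul] at h
  obtain ⟨ε, hε, hball⟩ := Metric.mem_nhds_iff.mp (hcont hV'n)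
  have hball' : ∀ s : ℝ, |s| < ε → s • m ∈ V' := by
    intro s hs
    exact hball (by simpa [Real.dist_eq] using hs)
  rw [Absorbs]
  filter_upwards [eventually_cobounded_le_norm (2 / ε)] with c hc
  intro y hy
  have h2ε : (0:ℝ) < 2 / ε := by positivity
  have hc0 : c ≠ 0 := by
    intro h; rw [h, norm_zero] at hc; exact absurd hc (not_le.mpr h2ε)
  have hcinv : |c⁻¹| < ε := by
    rw [abs_inv]
    calc |c|⁻¹ ≤ (2 / ε)⁻¹ := inv_anti₀ h2ε (by simpa [Real.norm_eq_abs] using hc)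
    _ = ε / 2 := by field_simp
    _ < ε := by linarith
  refine ⟨c⁻¹ • y, ?_, smul_inv_smul₀ hc0 y⟩
  have hnb : {z : G | c⁻¹ • y - z ∈ U₁} ∈ 𝓝 (c⁻¹ • y) := by
    have h := ((continuous_const.sub continuous_id :
        Continuous fun z : G => c⁻¹ • y - z)).tendsto (c⁻¹ • y)
    change Tendsto (fun z : G => c⁻¹ • y - z) (𝓝 (c⁻¹ • y)) (𝓝 (c⁻¹ • y - c⁻¹ • y)) at h
    rw [sub_self] at h
    exact h hU₁
  have hcl : ∃ z, (c⁻¹ • y - z ∈ U₁) ∧ z ∈ V' := by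
    have hc2 : Tendsto (fun s : ℝ => s • y) (𝓝 c⁻¹) (𝓝 (c⁻¹ • y)) :=
      ((continuous_id.smul (continuous_const : Continuous fun _ : ℝ => y))).tendsto c⁻¹
    obtain ⟨δ, hδ, hsubδ⟩ := Metric.mem_nhds_iff.mp (hc2 hnb)
    obtain ⟨q, hq⟩ := exists_rat_near c⁻¹ (lt_min_iff.mpr ⟨hδ, sub_pos.mpr hcinv⟩ :
      (0:ℝ) < min δ (ε - |c⁻¹|))
    have hq1 : |c⁻¹ - (q:ℝ)| < δ := lt_of_lt_of_le hq (min_le_left _ _)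
    have hq2 : |(q:ℝ)| < ε := by
      have h3 : |(q:ℝ)| ≤ |c⁻¹| + |c⁻¹ - (q:ℝ)| := by
        have h4 := abs_sub_abs_le_abs_sub (q:ℝ) c⁻¹
        have h2 : |(q:ℝ) - c⁻¹| = |c⁻¹ - (q:ℝ)| := abs_sub_comm _ _
        linarith [h2 ▸ h4]
      have := lt_of_lt_of_le hq (min_le_right _ _)
      linarith
    refine ⟨(q : ℝ) • y, hsubδ ?_, aux_rat_smul_mem hV'solid hy q (hball' _ (by rwa [abs_abs]))⟩
    · simp only [Metric.mem_ball, Real.dist_eq]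
      rwa [abs_sub_comm]
  obtain ⟨z, hz1, hz2⟩ := hcl
  have := hadd _ hz1 _ (hV'sub hz2)
  simpa using this

lemma aux_neg_bounded {B : Set G} (hB : IsVonNBounded ℝ B) :
    IsVonNBounded ℝ ((fun v : G => -v) '' B) := by
  intro U hU
  have hU' : (fun x : G => -x) ⁻¹' U ∈ 𝓝 (0 : G) := by
    have h := (continuous_neg (G := G)).tendsto (0 : G)
    rw [neg_zero] at h
    exact h hU
  have h := hB hU'
  rw [Absorbs] at h ⊢
  filter_upwards [h] with c hc
  rintro _ ⟨b, hb, rfl⟩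
  obtain ⟨u, hu, rfl⟩ := hc hb
  exact ⟨-u, hu, by simp⟩

end AuxTop

section AuxFinSups
variable {G : Type*} [Lattice G]

lemma aux_foldr_sup (l : List G) (c a : G) :
    l.foldr (· ⊔ ·) (c ⊔ a) = c ⊔ l.foldr (· ⊔ ·) a := by
  induction l with
  | nil => rfl
  | cons b t ih =>
    simp only [List.foldr_cons, ih]
    rw [sup_left_comm]

lemma aux_sup_mem_finSups_s6 {A : Set G} {x y : G} (hx : x ∈ FinSups A) (hy : y ∈ FinSups A) :
    x ⊔ y ∈ FinSups A := by
  obtain ⟨a₁, ha₁, l₁, hl₁, rfl⟩ := hx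
  obtain ⟨a₂, ha₂, l₂, hl₂, rfl⟩ := hy
  refine ⟨a₁, ha₁, l₂ ++ (a₂ :: l₁), ?_, ?_⟩
  · intro b hb
    rcases List.mem_append.mp hb with h | h
    · exact hl₂ b h
    · rcases List.mem_cons.mp h with h | h
      · exact h ▸ ha₂
      · exact hl₁ b h
  · rw [List.foldr_append, List.foldr_cons, sup_comm a₂, aux_foldr_sup, sup_comm]

end AuxFinSups

section Operators

variable {V W : Type*} [Lattice V] [AddCommGroup V]
  [CovariantClass V V (· + ·) (· ≤ ·)] [Module ℝ V]
  [TopologicalSpace V] [IsTopologicalAddGroup V] [ContinuousSMul ℝ V]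
  [Lattice W] [AddCommGroup W]
  [CovariantClass W W (· + ·) (· ≤ ·)] [Module ℝ W]
  [TopologicalSpace W] [IsTopologicalAddGroup W] [ContinuousSMul ℝ W]

theorem stmt6 (hV : IsLocallySolid V) (hW : IsLocallySolid W)
    (hoc : OrderComplete V) (hAM : HasAMProperty V) (hLevi : HasLeviProperty V)
    (T : V →ₗ[ℝ] W) (hT : OrderBoundedOp T) : BbBoundedOp T := by
  intro B hB
  set B' : Set V := B ∪ ((fun v : V => -v) '' B) ∪ {0} with hB'def
  have hB'bdd : IsVonNBounded ℝ B' :=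
    (hB.union (aux_neg_bounded hB)).union (isVonNBounded_singleton 0)
  set D : Set V := {x | x ∈ FinSups B' ∧ 0 ≤ x} with hDdef
  have hDbdd : IsVonNBounded ℝ D :=
    (hAM B' hB'bdd).subset (fun x hx => hx.1)
  have h0B' : (0 : V) ∈ B' := Or.inr rfl
  have h0D : (0 : V) ∈ D := ⟨⟨0, h0B', [], by simp, rfl⟩, le_refl 0⟩
  have hdir : DirectedOn (· ≤ ·) D := by
    intro x hx y hy
    exact ⟨x ⊔ y, ⟨aux_sup_mem_finSups_s6 hx.1 hy.1, le_trans hx.2 le_sup_left⟩,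
      le_sup_left, le_sup_right⟩
  obtain ⟨e, he⟩ := hLevi D ⟨0, h0D⟩ hdir (fun x hx => hx.2) hDbdd
  have hsup0 : ∀ v ∈ B', v ⊔ 0 ∈ D := fun v hv =>
    ⟨⟨0, h0B', [v], by simpa using hv, rfl⟩, le_sup_right⟩
  have hBe : B ⊆ Icc (-e) e := by
    intro b hb
    constructor
    · have hmem : (-b) ⊔ 0 ∈ D := hsup0 _ (Or.inl (Or.inr ⟨b, hb, rfl⟩))
      have h1 : -b ≤ e := le_trans le_sup_left (he.1 hmem)
      exact neg_le.mp h1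
    · have hmem : b ⊔ 0 ∈ D := hsup0 _ (Or.inl (Or.inl hb))
      exact le_trans le_sup_left (he.1 hmem)
  obtain ⟨hbl, hba⟩ := hT (Icc (-e) e) bddBelow_Icc bddAbove_Icc
  obtain ⟨p, hp⟩ := hbl
  obtain ⟨q, hq⟩ := hba
  have himg : T '' B ⊆ {y : W | |y| ≤ |p| ⊔ |q|} := by
    rintro _ ⟨b, hb, rfl⟩
    have hmem : T b ∈ T '' Icc (-e) e := ⟨b, hBe hb, rfl⟩
    have h1 : p ≤ T b := hp hmem
    have h2 : T b ≤ q := hq hmem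
    refine abs_le'.mpr ⟨?_, ?_⟩
    · exact le_trans h2 (le_trans (le_abs_self q) le_sup_right)
    · exact le_trans (neg_le_neg_iff.mpr h1) (le_trans (neg_le_abs p) le_sup_left)
  exact (aux_interval_bounded_s6 hW (|p| ⊔ |q|)).subset himg


end Operators
end

section
/- The identity operator on ℝ^ℕ (with product topology and pointwise order) is order bounded and is the supremum of the increasing sequence of nb-bounded finite-rank projections P_n (where P_n keeps the first n coordinates and sets the rest to 0), yet the identity is not nb-bounded; hence the nb-bounded order bounded operators do not form a band in the order bounded operators. -/
open Filter Topology Bornology Set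

variable {X Y : Type*} [Lattice X] [AddCommGroup X] [Module ℝ X] [TopologicalSpace X]
  [Lattice Y] [AddCommGroup Y] [Module ℝ Y] [TopologicalSpace Y]

section Operators

variable {V W : Type*} [Lattice V] [AddCommGroup V]
  [CovariantClass V V (· + ·) (· ≤ ·)] [Module ℝ V]
  [TopologicalSpace V] [IsTopologicalAddGroup V] [ContinuousSMul ℝ V]
  [Lattice W] [AddCommGroup W]
  [CovariantClass W W (· + ·) (· ≤ ·)] [Module ℝ W]
  [TopologicalSpace W] [IsTopologicalAddGroup W] [ContinuousSMul ℝ W]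

/-- `T0` is the least upper bound of the set `𝒯` of operators within the class `P`,
for the operator order. -/
def OpIsLUBWithin (P : (V →ₗ[ℝ] W) → Prop) (𝒯 : Set (V →ₗ[ℝ] W)) (T0 : V →ₗ[ℝ] W) : Prop :=
  P T0 ∧ (∀ T ∈ 𝒯, OpLE T T0) ∧ ∀ T1, P T1 → (∀ T ∈ 𝒯, OpLE T T1) → OpLE T0 T1

/-- The net of operators decreases to `0` within the class `P`. -/
def OpDownToZero (P : (V →ₗ[ℝ] W) → Prop) {ι : Type} [Preorder ι]
    (T : ι → V →ₗ[ℝ] W) : Prop :=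
  (∀ i j, i ≤ j → OpLE (T j) (T i)) ∧ (∀ i, OpLE 0 (T i)) ∧
    ∀ S, P S → (∀ i, OpLE S (T i)) → OpLE S (0 : V →ₗ[ℝ] W)

end Operators

/-- The projection keeping the first `n` coordinates of a real sequence. -/
def seqProj (n : ℕ) : (ℕ → ℝ) →ₗ[ℝ] (ℕ → ℝ) where
  toFun x := fun i => if i < n then x i else 0
  map_add' x y := by funext i; by_cases h : i < n <;> simp [h]
  map_smul' c x := by funext i; by_cases h : i < n <;> simp [h]

section Aux

lemma seqProj_apply (n : ℕ) (x : ℕ → ℝ) (i : ℕ) :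
    seqProj n x i = if i < n then x i else 0 := rfl

lemma seqProj_monotone (n : ℕ) : Monotone (seqProj n) := by
  intro x y hxy i
  simp only [seqProj_apply]
  split
  · exact hxy i
  · exact le_refl 0

lemma seqProj_nbBounded (n : ℕ) : NbBoundedOp (seqProj n) := by
  refine ⟨Set.pi {i | i < n} (fun _ => Set.Icc (-1 : ℝ) 1), ?_, ?_⟩
  · exact set_pi_mem_nhds (Set.finite_Iio n) fun i _ =>
      Icc_mem_nhds (by norm_num) (by norm_num)
  · rw [isVonNBounded_pi_iff]
    intro i
    rw [NormedSpace.isVonNBounded_iff]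
    apply Bornology.IsBounded.subset (Metric.isBounded_Icc (-1 : ℝ) 1)
    rintro _ ⟨_, ⟨x, hx, rfl⟩, rfl⟩
    simp only [Function.eval, seqProj_apply]
    split_ifs with h
    · exact hx i h
    · constructor <;> norm_num

lemma not_nbBounded_id :
    ¬ NbBoundedOp (LinearMap.id : (ℕ → ℝ) →ₗ[ℝ] (ℕ → ℝ)) := by
  rintro ⟨U, hU, hB⟩
  rw [LinearMap.id_coe, Set.image_id] at hB
  rw [nhds_pi, Filter.mem_pi] at hU
  obtain ⟨I, hI, t, ht, hsub⟩ := hU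
  obtain ⟨N, hN⟩ := hI.infinite_compl.nonempty
  have hline : ∀ c : ℝ, Pi.single N c ∈ U := by
    intro c
    apply hsub
    intro i hi
    have hiN : i ≠ N := fun h => hN (h ▸ hi)
    rw [Pi.single_eq_of_ne hiN]
    exact mem_of_mem_nhds (ht i)
  set V : Set (ℕ → ℝ) := (fun y => y N) ⁻¹' Metric.ball (0 : ℝ) 1 with hV
  have hVmem : V ∈ 𝓝 (0 : ℕ → ℝ) := by
    have : ContinuousAt (fun y : ℕ → ℝ => y N) 0 := (continuous_apply N).continuousAt
    exact this.preimage_mem_nhds (Metric.ball_mem_nhds 0 one_pos)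
  obtain ⟨r, hr⟩ := absorbs_iff_norm.mp (hB hVmem)
  set a : ℝ := max r 1 with ha
  have ha0 : a ≠ 0 := by positivity
  have hnorm : r ≤ ‖a‖ := le_trans (le_max_left r 1) (le_abs_self a)
  have hmem := hr a hnorm (hline (2 * a))
  obtain ⟨v, hv, hav⟩ := hmem
  have heq : a * v N = 2 * a := by
    have := congrFun hav N
    simpa [Pi.single_eq_same] using this
  have hvN : v N = 2 := by
    have := mul_left_cancel₀ ha0 (heq.trans (mul_comm 2 a))
    linarith
  have hlt : |v N| < 1 := by
    have : v N ∈ Metric.ball (0 : ℝ) 1 := hv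
    simpa [Real.dist_eq] using this
  rw [hvN] at hlt
  norm_num at hlt

end Aux

/-- on ℝ^ℕ the identity is order bounded and is the supremum (among order
bounded operators) of the increasing sequence of nb-bounded projections, but is not
nb-bounded; hence the nb-bounded order bounded operators do not form a band. -/
theorem stmt18 :
    OrderBoundedOp (LinearMap.id : (ℕ → ℝ) →ₗ[ℝ] (ℕ → ℝ)) ∧
    (∀ n, NbBoundedOp (seqProj n) ∧ OrderBoundedOp (seqProj n)) ∧
    (∀ m n, m ≤ n → OpLE (seqProj m) (seqProj n)) ∧
    OpIsLUBWithin OrderBoundedOp {T | ∃ n, T = seqProj n} LinearMap.id ∧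
    ¬ NbBoundedOp (LinearMap.id : (ℕ → ℝ) →ₗ[ℝ] (ℕ → ℝ)) ∧
    ¬ (∀ (𝒯 : Set ((ℕ → ℝ) →ₗ[ℝ] (ℕ → ℝ))) (T0 : (ℕ → ℝ) →ₗ[ℝ] (ℕ → ℝ)),
        (∀ T ∈ 𝒯, OrderBoundedOp T ∧ NbBoundedOp T) →
        OpIsLUBWithin OrderBoundedOp 𝒯 T0 → NbBoundedOp T0) := by
  
  refine ⟨?_, ?_, ?_, ?_, not_nbBounded_id, ?_⟩
  · intro A ⟨a, ha⟩ ⟨b, hb⟩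
    exact ⟨⟨a, by rintro _ ⟨x, hx, rfl⟩; exact ha hx⟩,
           ⟨b, by rintro _ ⟨x, hx, rfl⟩; exact hb hx⟩⟩
  · intro n
    refine ⟨seqProj_nbBounded n, ?_⟩
    intro A ⟨a, ha⟩ ⟨b, hb⟩
    exact ⟨⟨seqProj n a, by rintro _ ⟨x, hx, rfl⟩; exact seqProj_monotone n (ha hx)⟩,
           ⟨seqProj n b, by rintro _ ⟨x, hx, rfl⟩; exact seqProj_monotone n (hb hx)⟩⟩
  · intro m n hmn x hx i
    simp only [seqProj_apply]
    split_ifs with h1 h2 h2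
    · exact le_refl _
    · exact absurd (lt_of_lt_of_le h1 hmn) h2
    · exact hx i
    · exact le_refl 0
  · refine ⟨?_, ?_, ?_⟩
    · intro A ⟨a, ha⟩ ⟨b, hb⟩
      exact ⟨⟨a, by rintro _ ⟨x, hx, rfl⟩; exact ha hx⟩,
             ⟨b, by rintro _ ⟨x, hx, rfl⟩; exact hb hx⟩⟩
    · rintro T ⟨n, rfl⟩ x hx i
      simp only [seqProj_apply, LinearMap.id_coe, id_eq]
      split
      · exact le_refl _
      · exact hx i
    · intro T1 _ hT1 x hx i
      have := hT1 (seqProj (i + 1)) ⟨i + 1, rfl⟩ x hx i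
      simpa [seqProj_apply, Nat.lt_succ_self] using this
  · intro H
    apply not_nbBounded_id
    refine H {T | ∃ n, T = seqProj n} LinearMap.id ?_ ?_
    · rintro T ⟨n, rfl⟩
      refine ⟨?_, seqProj_nbBounded n⟩
      intro A ⟨a, ha⟩ ⟨b, hb⟩
      exact ⟨⟨seqProj n a, by rintro _ ⟨x, hx, rfl⟩; exact seqProj_monotone n (ha hx)⟩,
             ⟨seqProj n b, by rintro _ ⟨x, hx, rfl⟩; exact seqProj_monotone n (hb hx)⟩⟩
    · refine ⟨?_, ?_, ?_⟩
      · intro A ⟨a, ha⟩ ⟨b, hb⟩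
        exact ⟨⟨a, by rintro _ ⟨x, hx, rfl⟩; exact ha hx⟩,
               ⟨b, by rintro _ ⟨x, hx, rfl⟩; exact hb hx⟩⟩
      · rintro T ⟨n, rfl⟩ x hx i
        simp only [seqProj_apply, LinearMap.id_coe, id_eq]
        split
        · exact le_refl _
        · exact hx i
      · intro T1 _ hT1 x hx i
        have := hT1 (seqProj (i + 1)) ⟨i + 1, rfl⟩ x hx i
        simpa [seqProj_apply, Nat.lt_succ_self] using this
end

section
/- The space ℓ∞ with its absolute weak topology |σ|(ℓ∞, ℓ₁) and pointwise ordering has the AM-property and the Levi property, and the identity map from (ℓ∞, |σ|(ℓ∞,ℓ₁)) to (ℓ∞, norm topology) is order bounded but not continuous. -/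
open Filter Topology Bornology Set

variable {X Y : Type*} [Lattice X] [AddCommGroup X] [Module ℝ X] [TopologicalSpace X]
  [Lattice Y] [AddCommGroup Y] [Module ℝ Y] [TopologicalSpace Y]

/-- The absolute-weak seminorm on ℓ∞ (realized as bounded functions BoundedContinuousFunction ℕ ℝ) induced by
an element of ℓ¹. -/
noncomputable def awSeminorm (f : lp (fun _ : ℕ => ℝ) 1) (x : BoundedContinuousFunction ℕ ℝ) : ℝ :=
  ∑' n, |f n| * |x n|

/-- The absolute weak topology |σ|(ℓ∞, ℓ₁): the topology generated by the balls of the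
seminorms `awSeminorm f`, `f ∈ ℓ₁`. -/
noncomputable def awTopology : TopologicalSpace (BoundedContinuousFunction ℕ ℝ) :=
  TopologicalSpace.generateFrom
    {s | ∃ (f : lp (fun _ : ℕ => ℝ) 1) (c : BoundedContinuousFunction ℕ ℝ) (ε : ℝ), 0 < ε ∧
      s = {x | awSeminorm f (x - c) < ε}}

section Aux19

noncomputable abbrev XX := BoundedContinuousFunction ℕ ℝ
noncomputable abbrev L1 := lp (fun _ : ℕ => ℝ) 1

lemma l1_summable (f : L1) : Summable fun n => |f n| := by
  have h := (lp.memℓp f).summable (p := 1) (by norm_num)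
  simpa [Real.norm_eq_abs] using h

lemma aw_summable (f : L1) (x : XX) : Summable fun n => |f n| * |x n| :=
  Summable.of_nonneg_of_le (fun n => by positivity)
    (fun n => mul_le_mul_of_nonneg_left
      (by simpa [Real.norm_eq_abs] using x.norm_coe_le_norm n) (abs_nonneg _))
    ((l1_summable f).mul_right ‖x‖)

lemma awSeminorm_nonneg (f : L1) (x : XX) : 0 ≤ awSeminorm f x :=
  tsum_nonneg fun n => by positivity

lemma awSeminorm_zero (f : L1) : awSeminorm f (0 : XX) = 0 := by
  simp [awSeminorm]

lemma awSeminorm_neg (f : L1) (x : XX) : awSeminorm f (-x) = awSeminorm f x := by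
  simp [awSeminorm]

lemma awSeminorm_add (f : L1) (x y : XX) :
    awSeminorm f (x + y) ≤ awSeminorm f x + awSeminorm f y := by
  rw [awSeminorm, awSeminorm, awSeminorm, ← Summable.tsum_add (aw_summable f x) (aw_summable f y)]
  refine Summable.tsum_le_tsum (fun n => ?_) (aw_summable f (x + y))
    ((aw_summable f x).add (aw_summable f y))
  have : |(x + y) n| ≤ |x n| + |y n| := by
    simpa using abs_add_le (x n) (y n)
  calc |f n| * |(x + y) n| ≤ |f n| * (|x n| + |y n|) :=
        mul_le_mul_of_nonneg_left this (abs_nonneg _)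
    _ = |f n| * |x n| + |f n| * |y n| := by ring

lemma awSeminorm_smul (f : L1) (c : ℝ) (x : XX) :
    awSeminorm f (c • x) = |c| * awSeminorm f x := by
  rw [awSeminorm, awSeminorm, ← tsum_mul_left]
  refine tsum_congr fun n => ?_
  simp [abs_mul]
  ring

lemma awSeminorm_mono (f : L1) {x y : XX} (h : ∀ n, |x n| ≤ |y n|) :
    awSeminorm f x ≤ awSeminorm f y :=
  Summable.tsum_le_tsum (fun n => mul_le_mul_of_nonneg_left (h n) (abs_nonneg _))
    (aw_summable f x) (aw_summable f y)

def awBall (f : L1) (ε : ℝ) : Set XX := {x | awSeminorm f x < ε}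

def awGen : Set (Set XX) :=
  {s | ∃ (f : L1) (c : XX) (ε : ℝ), 0 < ε ∧ s = {x | awSeminorm f (x - c) < ε}}

lemma awTopology_eq : awTopology = TopologicalSpace.generateFrom awGen := rfl

lemma awBall_mem_gen (f : L1) {ε : ℝ} (hε : 0 < ε) : awBall f ε ∈ awGen :=
  ⟨f, 0, ε, hε, by ext x; simp [awBall]⟩

lemma zero_mem_awBall (f : L1) {ε : ℝ} (hε : 0 < ε) : (0 : XX) ∈ awBall f ε := by
  simp [awBall, awSeminorm_zero, hε]

lemma awBall_mem_nhds (f : L1) {ε : ℝ} (hε : 0 < ε) :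
    awBall f ε ∈ @nhds _ awTopology (0 : XX) := by
  letI : TopologicalSpace XX := awTopology
  exact IsOpen.mem_nhds
    (TopologicalSpace.isOpen_generateFrom_of_mem (awBall_mem_gen f hε))
    (zero_mem_awBall f hε)

noncomputable def combineL1 (f g : L1) : L1 :=
  ⟨fun n => |f n| + |g n|, by
    apply memℓp_gen (p := 1)
    simp only [ENNReal.toReal_one, Real.rpow_one, Real.norm_eq_abs]
    exact ((l1_summable f).add (l1_summable g)).congr fun n =>
      (abs_of_nonneg (by positivity)).symm⟩

lemma combineL1_apply (f g : L1) (n : ℕ) : combineL1 f g n = |f n| + |g n| := rfl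

lemma awSeminorm_mono_coef {f g : L1} (h : ∀ n, |f n| ≤ |g n|) (x : XX) :
    awSeminorm f x ≤ awSeminorm g x :=
  Summable.tsum_le_tsum (fun n => mul_le_mul_of_nonneg_right (h n) (abs_nonneg _))
    (aw_summable f x) (aw_summable g x)

lemma abs_combineL1 (f g : L1) (n : ℕ) : |combineL1 f g n| = |f n| + |g n| := by
  rw [combineL1_apply, abs_of_nonneg (by positivity)]

lemma awSeminorm_le_combine_left (f g : L1) (x : XX) :
    awSeminorm f x ≤ awSeminorm (combineL1 f g) x := by
  refine awSeminorm_mono_coef (fun n => ?_) x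
  rw [abs_combineL1]; linarith [abs_nonneg (g n)]

lemma awSeminorm_le_combine_right (f g : L1) (x : XX) :
    awSeminorm g x ≤ awSeminorm (combineL1 f g) x := by
  refine awSeminorm_mono_coef (fun n => ?_) x
  rw [abs_combineL1]; linarith [abs_nonneg (f n)]

lemma exists_awBall_subset {s : Set XX} (hs : s ∈ awGen) (h0 : (0 : XX) ∈ s) :
    ∃ f ε, 0 < ε ∧ awBall f ε ⊆ s := by
  obtain ⟨f, c, ε, hε, rfl⟩ := hs
  have h0' : awSeminorm f c < ε := by
    have := h0
    simpa [awSeminorm_neg] using this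
  refine ⟨f, ε - awSeminorm f c, by linarith, fun x hx => ?_⟩
  have hx' : awSeminorm f x < ε - awSeminorm f c := hx
  show awSeminorm f (x - c) < ε
  have h1 : awSeminorm f (x - c) ≤ awSeminorm f x + awSeminorm f (-c) := by
    simpa [sub_eq_add_neg] using awSeminorm_add f x (-c)
  rw [awSeminorm_neg] at h1
  linarith

lemma aw_nhds_iff {U : Set XX} :
    U ∈ @nhds _ awTopology (0 : XX) ↔ ∃ f ε, 0 < ε ∧ awBall f ε ⊆ U := by
  constructor
  · intro hU
    rw [awTopology_eq, TopologicalSpace.nhds_generateFrom] at hU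
    rw [iInf_subtype'] at hU
    haveI : Nonempty {s : Set XX // s ∈ {s | (0 : XX) ∈ s ∧ s ∈ awGen}} :=
      ⟨⟨awBall (0 : L1) 1, zero_mem_awBall 0 one_pos, awBall_mem_gen 0 one_pos⟩⟩
    have hdir : Directed (· ≥ ·)
        (fun s : {s : Set XX // s ∈ {s | (0 : XX) ∈ s ∧ s ∈ awGen}} => 𝓟 s.1) := by
      rintro ⟨s, hs0, hsg⟩ ⟨t, ht0, htg⟩
      obtain ⟨f, ε, hε, hfs⟩ := exists_awBall_subset hsg hs0
      obtain ⟨g, δ, hδ, hgt⟩ := exists_awBall_subset htg ht0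
      have hmin : 0 < min ε δ := lt_min hε hδ
      refine ⟨⟨awBall (combineL1 f g) (min ε δ),
        zero_mem_awBall _ hmin, awBall_mem_gen _ hmin⟩, ?_, ?_⟩
      · refine principal_mono.2 (fun x hx => hfs ?_)
        exact lt_of_le_of_lt (awSeminorm_le_combine_left f g x)
          (lt_of_lt_of_le hx (min_le_left _ _))
      · refine principal_mono.2 (fun x hx => hgt ?_)
        exact lt_of_le_of_lt (awSeminorm_le_combine_right f g x)
          (lt_of_lt_of_le hx (min_le_right _ _))
    obtain ⟨⟨s, hs0, hsg⟩, hsU⟩ := (Filter.mem_iInf_of_directed hdir U).1 hU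
    obtain ⟨f, ε, hε, hfs⟩ := exists_awBall_subset hsg hs0
    exact ⟨f, ε, hε, hfs.trans hsU⟩
  · rintro ⟨f, ε, hε, hsub⟩
    exact Filter.mem_of_superset (awBall_mem_nhds f hε) hsub

lemma awSeminorm_le_norm (f : L1) (x : XX) :
    awSeminorm f x ≤ (∑' n, |f n|) * ‖x‖ := by
  rw [← tsum_mul_right]
  refine Summable.tsum_le_tsum (fun n => mul_le_mul_of_nonneg_left ?_ (abs_nonneg _))
    (aw_summable f x) ((l1_summable f).mul_right _)
  simpa [Real.norm_eq_abs] using x.norm_coe_le_norm n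

lemma seminorm_bound_of_vNBounded {B : Set XX}
    (hB : @IsVonNBounded ℝ XX _ _ _ awTopology B) (f : L1) :
    ∃ M, ∀ x ∈ B, awSeminorm f x ≤ M := by
  have h := hB (awBall_mem_nhds f one_pos)
  obtain ⟨c, hcB, _hc1⟩ := (h.and (eventually_cobounded_le_norm (E := ℝ) 1)).exists
  refine ⟨|c|, fun x hx => ?_⟩
  obtain ⟨y, hy, rfl⟩ := hcB hx
  have hy' : awSeminorm f y < 1 := hy
  rw [awSeminorm_smul]
  calc |c| * awSeminorm f y ≤ |c| * 1 :=
        mul_le_mul_of_nonneg_left hy'.le (abs_nonneg _)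
    _ = |c| := mul_one _

lemma vNBounded_of_norm_bounded {B : Set XX} {M : ℝ} (hM0 : 0 ≤ M)
    (hM : ∀ x ∈ B, ‖x‖ ≤ M) :
    @IsVonNBounded ℝ XX _ _ _ awTopology B := by
  intro U hU
  obtain ⟨f, ε, hε, hsub⟩ := aw_nhds_iff.1 hU
  refine Absorbs.mono_left ?_ hsub
  set S : ℝ := ∑' n, |f n| with hS
  have hS0 : 0 ≤ S := tsum_nonneg fun n => abs_nonneg _
  filter_upwards [eventually_cobounded_le_norm (E := ℝ) (S * M / ε + 1)] with c hc
  have hc0 : 0 < ‖c‖ := lt_of_lt_of_le (by positivity) hc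
  have hcne : c ≠ 0 := by
    intro h; rw [h, norm_zero] at hc0; exact lt_irrefl _ hc0
  intro x hx
  rw [Set.mem_smul_set_iff_inv_smul_mem₀ hcne]
  show awSeminorm f (c⁻¹ • x) < ε
  rw [awSeminorm_smul, abs_inv]
  have hxS : awSeminorm f x ≤ S * M :=
    (awSeminorm_le_norm f x).trans (mul_le_mul_of_nonneg_left (hM x hx) hS0)
  have h1 : S * M / ε < |c| := lt_of_lt_of_le (lt_add_one _) (by simpa [Real.norm_eq_abs] using hc)
  have h2 : S * M < |c| * ε := by
    rw [div_lt_iff₀ hε] at h1; linarith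
  have hcabs : 0 < |c| := by simpa [Real.norm_eq_abs] using hc0
  calc |c|⁻¹ * awSeminorm f x ≤ |c|⁻¹ * (S * M) :=
        mul_le_mul_of_nonneg_left hxS (by positivity)
    _ < |c|⁻¹ * (|c| * ε) := by
        exact mul_lt_mul_of_pos_left h2 (by positivity)
    _ = ε := by field_simp

lemma pairing_summable (f : L1) (x : XX) : Summable fun n => f n * x n := by
  refine Summable.of_norm ?_
  simpa [Real.norm_eq_abs, abs_mul] using aw_summable f x

lemma pairing_norm_le (f : L1) (x : XX) :
    ‖∑' n, f n * x n‖ ≤ awSeminorm f x := by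
  have h := norm_tsum_le_tsum_norm (f := fun n => f n * x n)
    (by simpa [Real.norm_eq_abs, abs_mul] using aw_summable f x)
  simpa [Real.norm_eq_abs, abs_mul, awSeminorm] using h

lemma l1_norm_eq (f : L1) : ‖f‖ = ∑' n, |f n| := by
  rw [lp.norm_eq_tsum_rpow (by norm_num) f]
  simp [Real.norm_eq_abs]

noncomputable def pairing (x : XX) : L1 →L[ℝ] ℝ :=
  LinearMap.mkContinuous
    { toFun := fun f => ∑' n, f n * x n
      map_add' := fun f g => by
        simp only [lp.coeFn_add, Pi.add_apply, add_mul]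
        exact Summable.tsum_add (pairing_summable f x) (pairing_summable g x)
      map_smul' := fun c f => by
        simp only [lp.coeFn_smul, Pi.smul_apply, smul_eq_mul, RingHom.id_apply]
        rw [← tsum_mul_left]
        exact tsum_congr fun n => by ring }
    ‖x‖ (fun f => by
      have h1 := pairing_norm_le f x
      have h2 : awSeminorm f x ≤ (∑' n, |f n|) * ‖x‖ := awSeminorm_le_norm f x
      rw [← l1_norm_eq] at h2
      calc ‖∑' n, f n * x n‖ ≤ awSeminorm f x := h1
        _ ≤ ‖f‖ * ‖x‖ := h2
        _ = ‖x‖ * ‖f‖ := mul_comm _ _)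

lemma pairing_apply (x : XX) (f : L1) : pairing x f = ∑' n, f n * x n := rfl

lemma pairing_single (x : XX) (n : ℕ) : pairing x (lp.single 1 n 1) = x n := by
  rw [pairing_apply, tsum_eq_single n]
  · rw [lp.single_apply_self, one_mul]
  · intro m hm
    rw [lp.single_apply_ne 1 n _ hm, zero_mul]

lemma norm_single_one (n : ℕ) : ‖(lp.single 1 n (1 : ℝ) : L1)‖ = 1 := by
  have := lp.norm_single (p := 1) (E := fun _ : ℕ => ℝ) (by norm_num) n (1 : ℝ)
  simpa using this

lemma norm_bound_of_vNBounded {B : Set XX}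
    (hB : @IsVonNBounded ℝ XX _ _ _ awTopology B) :
    ∃ M, 0 ≤ M ∧ ∀ x ∈ B, ‖x‖ ≤ M := by
  haveI : Fact ((1 : ENNReal) ≤ 1) := ⟨le_refl _⟩
  have hpt : ∀ f : L1, ∃ C, ∀ i : B, ‖pairing (i : XX) f‖ ≤ C := by
    intro f
    obtain ⟨M, hM⟩ := seminorm_bound_of_vNBounded hB f
    exact ⟨M, fun i => (pairing_norm_le f i).trans (hM i i.2)⟩
  obtain ⟨C, hC⟩ := banach_steinhaus hpt
  refine ⟨max C 0, le_max_right _ _, fun x hx => ?_⟩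
  refine (BoundedContinuousFunction.norm_le (le_max_right _ _)).2 fun n => ?_
  calc ‖x n‖ = ‖pairing x (lp.single 1 n 1)‖ := by rw [pairing_single]
    _ ≤ ‖pairing x‖ * ‖(lp.single 1 n (1 : ℝ) : L1)‖ := (pairing x).le_opNorm _
    _ ≤ C * 1 := by
        rw [norm_single_one]
        exact mul_le_mul_of_nonneg_right (hC ⟨x, hx⟩)  zero_le_one
    _ ≤ max C 0 := by simp

lemma bcf_le_iff {f g : XX} : f ≤ g ↔ ∀ n, f n ≤ g n := Iff.rfl

def mkBCF (g : ℕ → ℝ) (C : ℝ) (h : ∀ n, |g n| ≤ C) : XX :=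
  ⟨⟨g, continuous_of_discreteTopology⟩, C + C, fun n m => by
    calc dist (g n) (g m) = |g n - g m| := Real.dist_eq _ _
      _ ≤ |g n| + |g m| := by
          rw [sub_eq_add_neg]
          exact (abs_add_le _ _).trans (by rw [abs_neg])
      _ ≤ C + C := add_le_add (h n) (h m)⟩

lemma mkBCF_apply (g : ℕ → ℝ) (C : ℝ) (h : ∀ n, |g n| ≤ C) (n : ℕ) :
    mkBCF g C h n = g n := rfl

lemma norm_sup_le {b w : XX} {C : ℝ} (hC : 0 ≤ C) (hb : ‖b‖ ≤ C) (hw : ‖w‖ ≤ C) :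
    ‖b ⊔ w‖ ≤ C := by
  refine (BoundedContinuousFunction.norm_le hC).2 fun n => ?_
  have hb' : |b n| ≤ C := le_trans (by simpa [Real.norm_eq_abs] using b.norm_coe_le_norm n) hb
  have hw' : |w n| ≤ C := le_trans (by simpa [Real.norm_eq_abs] using w.norm_coe_le_norm n) hw
  have hsup : (b ⊔ w) n = b n ⊔ w n := rfl
  rw [Real.norm_eq_abs, hsup]
  rw [abs_le] at hb' hw' ⊢
  exact ⟨le_trans hb'.1 (le_max_left _ _), max_le hb'.2 hw'.2⟩

end Aux19

/-- ℓ∞ with the absolute weak topology has the AM and Levi properties, and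
the identity into ℓ∞ with the norm topology is order bounded but not continuous. -/


theorem stmt19 :
    @HasAMProperty (BoundedContinuousFunction ℕ ℝ) _ _ _ awTopology ∧
    @HasLeviProperty (BoundedContinuousFunction ℕ ℝ) _ _ _ awTopology ∧
    OrderBoundedOp (LinearMap.id : (BoundedContinuousFunction ℕ ℝ) →ₗ[ℝ] (BoundedContinuousFunction ℕ ℝ)) ∧
    ¬ @Continuous (BoundedContinuousFunction ℕ ℝ) (BoundedContinuousFunction ℕ ℝ) awTopology inferInstance id := by
  refine ⟨?_, ?_, ?_, ?_⟩
  · -- AM property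
    intro B hB
    obtain ⟨M, hM0, hM⟩ := norm_bound_of_vNBounded hB
    refine vNBounded_of_norm_bounded hM0 ?_
    rintro x ⟨a, ha, l, hl, rfl⟩
    have key : ∀ l' : List XX, (∀ b ∈ l', b ∈ B) → ‖l'.foldr (· ⊔ ·) a‖ ≤ M := by
      intro l'
      induction l' with
      | nil => exact fun _ => hM a ha
      | cons b t ih =>
        intro h
        simp only [List.foldr_cons]
        exact norm_sup_le hM0 (hM b (h b (List.mem_cons_self)))
          (ih fun c hc => h c (List.mem_cons_of_mem _ hc))
    exact key l hl
  · -- Levi property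
    intro D hne hdir hpos hbdd
    obtain ⟨M, hM0, hM⟩ := norm_bound_of_vNBounded hbdd
    have habs : ∀ x ∈ D, ∀ n, |x n| ≤ M := fun x hx n =>
      le_trans (by simpa [Real.norm_eq_abs] using x.norm_coe_le_norm n) (hM x hx)
    set g : ℕ → ℝ := fun n => sSup ((fun z : XX => z n) '' D) with hg
    have hbdd' : ∀ n, BddAbove ((fun z : XX => z n) '' D) := fun n =>
      ⟨M, by rintro - ⟨z, hz, rfl⟩; exact (abs_le.1 (habs z hz n)).2⟩
    have hne' : ∀ n, ((fun z : XX => z n) '' D).Nonempty := fun n => hne.image _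
    have hgabs : ∀ n, |g n| ≤ M := by
      intro n
      rw [abs_le]
      constructor
      · obtain ⟨x, hx⟩ := hne
        exact le_trans (abs_le.1 (habs x hx n)).1 (le_csSup (hbdd' n) ⟨x, hx, rfl⟩)
      · exact csSup_le (hne' n) (by rintro - ⟨z, hz, rfl⟩; exact (abs_le.1 (habs z hz n)).2)
    refine ⟨mkBCF g M hgabs, ?_, ?_⟩
    · intro x hx
      rw [bcf_le_iff]
      intro n
      rw [mkBCF_apply]
      exact le_csSup (hbdd' n) ⟨x, hx, rfl⟩
    · intro z hz
      rw [bcf_le_iff]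
      intro n
      rw [mkBCF_apply]
      refine csSup_le (hne' n) ?_
      rintro - ⟨x, hx, rfl⟩
      exact bcf_le_iff.1 (hz hx) n
  · -- id is order bounded
    intro A h1 h2
    simpa [LinearMap.id_coe, Set.image_id] using And.intro h1 h2
  · -- id is not continuous
    intro hc
    have ht : Tendsto (id : XX → XX) (@nhds _ awTopology 0) (𝓝 0) := by
      have := @Continuous.tendsto _ _ awTopology _ _ hc 0
      simpa using this
    have hU : Metric.ball (0 : XX) 1 ∈ 𝓝 (0 : XX) := Metric.ball_mem_nhds _ one_pos
    have hmem : Metric.ball (0 : XX) 1 ∈ @nhds _ awTopology (0 : XX) := by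
      have := ht hU
      rw [Filter.mem_map] at this
      simpa using this
    obtain ⟨f, ε, hε, hsub⟩ := aw_nhds_iff.1 hmem
    have htend : Tendsto (fun n => |f n|) atTop (𝓝 0) := (l1_summable f).tendsto_atTop_zero
    obtain ⟨n, hn⟩ := (htend.eventually_lt_const (show (0 : ℝ) < ε / 2 by positivity)).exists
    set d : XX := mkBCF (fun m => if m = n then 2 else 0) 2
      (by intro m; by_cases h : m = n <;> simp [h]) with hd
    have hdn : d n = 2 := by rw [hd, mkBCF_apply]; simp
    have hdm : ∀ m, m ≠ n → d m = 0 := by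
      intro m hm
      rw [hd, mkBCF_apply]
      simp [hm]
    have hsem : awSeminorm f d = |f n| * 2 := by
      rw [awSeminorm, tsum_eq_single n]
      · rw [hdn]
        norm_num
      · intro m hm
        rw [hdm m hm]
        simp
    have hball : d ∈ awBall f ε := by
      show awSeminorm f d < ε
      rw [hsem]; linarith
    have hlt := hsub hball
    rw [Metric.mem_ball, dist_zero_right] at hlt
    have h2 : (2 : ℝ) ≤ ‖d‖ := by
      have := d.norm_coe_le_norm n
      rw [hdn] at this
      simpa using this
    linarith
end
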